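/- Let ρ > 0, R > 1, and ξ > (ρ/2)(R - 1/R) be a real number. Then the function g(τ) = exp((ρ/2)(Rτ + 1/(Rτ))) · τ^{-ξ} on (1,∞) attains its minimum at τ* = (ξ + √(ξ² + ρ²))/(ρR), and τ* > 1. -/

import Mathlib

/-- The function `g(τ) = exp((ρ/2)(Rτ + 1/(Rτ))) τ^{-ξ}` on `(1,∞)` attains its minimum at
`τ* = (ξ + √(ξ² + ρ²))/(ρR)`, provided `ρ > 0`, `R > 1` and `ξ > (ρ/2)(R - 1/R)`. -/
theorem stmt_6 (ρ R ξ : ℝ) (hρ : 0 < ρ) (hR : 1 < R)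
    (hξ : ρ / 2 * (R - 1 / R) < ξ)
    (g : ℝ → ℝ)
    (hg : ∀ τ : ℝ, g τ = Real.exp (ρ / 2 * (R * τ + 1 / (R * τ))) * τ ^ (-ξ))
    (τstar : ℝ) (hτstar : τstar = (ξ + Real.sqrt (ξ ^ 2 + ρ ^ 2)) / (ρ * R)) :
    1 < τstar ∧ ∀ τ ∈ Set.Ioi (1 : ℝ), g τstar ≤ g τ := by
  have hR0 : 0 < R := lt_trans one_pos hR
  set s := Real.sqrt (ξ ^ 2 + ρ ^ 2) with hs
  have hs2 : s ^ 2 = ξ ^ 2 + ρ ^ 2 := Real.sq_sqrt (by positivity)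
  have hspos : 0 < s := Real.sqrt_pos.2 (by positivity)
  have hRinv : R * (1 / R) = 1 := mul_one_div_cancel hR0.ne'
  have h1R : 1 / R < 1 := (div_lt_one hR0).2 hR
  have hξpos : 0 < ξ :=
    lt_trans (mul_pos (by positivity) (by linarith : (0:ℝ) < R - 1 / R)) hξ
  have hsξ : ξ < s := by nlinarith
  have hsgt : ρ * R - ξ < s := by
    rcases le_or_gt (ρ * R - ξ) 0 with h | h
    · exact lt_of_le_of_lt h hspos
    · nlinarith
  have hrt : ρ * R * τstar = ξ + s := by
    rw [hτstar]; field_simp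
  have hτs1 : 1 < τstar := by
    rw [hτstar]
    rw [lt_div_iff₀ (by positivity)]
    linarith
  have hτs0 : 0 < τstar := lt_trans one_pos hτs1
  -- the logarithm of g
  set h : ℝ → ℝ := fun τ => ρ / 2 * (R * τ + 1 / (R * τ)) - ξ * Real.log τ with hh
  set D : ℝ → ℝ := fun τ => ρ / 2 * (R + -R / (R * τ) ^ 2) - ξ * τ⁻¹ with hD
  have hd : ∀ τ : ℝ, 0 < τ → HasDerivAt h (D τ) τ := by
    intro τ hτ
    have hRτ : R * τ ≠ 0 := by positivity
    have d1 : HasDerivAt (fun τ : ℝ => R * τ) R τ := by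
      simpa using (hasDerivAt_id τ).const_mul R
    have d2 : HasDerivAt (fun τ : ℝ => 1 / (R * τ)) (-R / (R * τ) ^ 2) τ := by
      simpa [one_div, Pi.inv_def] using d1.inv hRτ
    have d3 : HasDerivAt Real.log τ⁻¹ τ := Real.hasDerivAt_log hτ.ne'
    exact ((d1.add d2).const_mul (ρ / 2)).sub (d3.const_mul ξ)
  have hDval : ∀ τ : ℝ, 0 < τ →
      D τ = (ρ * R * τ ^ 2 - 2 * ξ * τ - ρ / R) / (2 * τ ^ 2) := by
    intro τ hτ
    rw [hD]
    field_simp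
    ring
  have e0 : ρ * R * τstar ^ 2 - 2 * ξ * τstar - ρ / R = 0 := by
    rw [hτstar]
    field_simp
    linear_combination hs2
  have hDpos : ∀ τ : ℝ, τstar < τ → 0 < D τ := by
    intro τ hlt
    have hτ0 : 0 < τ := lt_trans hτs0 hlt
    rw [hDval τ hτ0]
    apply div_pos _ (by positivity)
    nlinarith [mul_pos (sub_pos.2 hlt) (mul_pos (mul_pos hρ hR0) hτ0)]
  have hDneg : ∀ τ : ℝ, 0 < τ → τ < τstar → D τ < 0 := by
    intro τ hτ0 hlt
    rw [hDval τ hτ0]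
    apply div_neg_of_neg_of_pos _ (by positivity)
    nlinarith [mul_pos (sub_pos.2 hlt) (mul_pos (mul_pos hρ hR0) hτ0)]
  have anti : AntitoneOn h (Set.Icc 1 τstar) := by
    have : StrictAntiOn h (Set.Icc 1 τstar) := by
      apply strictAntiOn_of_deriv_neg (convex_Icc 1 τstar)
      · intro x hx
        exact (hd x (lt_of_lt_of_le one_pos hx.1)).continuousAt.continuousWithinAt
      · intro x hx
        rw [interior_Icc] at hx
        rw [(hd x (lt_trans one_pos hx.1)).deriv]
        exact hDneg x (lt_trans one_pos hx.1) hx.2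
    exact this.antitoneOn
  have mono : MonotoneOn h (Set.Ici τstar) := by
    have : StrictMonoOn h (Set.Ici τstar) := by
      apply strictMonoOn_of_deriv_pos (convex_Ici τstar)
      · intro x hx
        exact (hd x (lt_of_lt_of_le hτs0 hx)).continuousAt.continuousWithinAt
      · intro x hx
        rw [interior_Ici] at hx
        rw [(hd x (lt_trans hτs0 hx)).deriv]
        exact hDpos x hx
    exact this.monotoneOn
  have hgh : ∀ σ : ℝ, 0 < σ → g σ = Real.exp (h σ) := by
    intro σ hσ
    rw [hg, Real.rpow_def_of_pos hσ, ← Real.exp_add, hh]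
    congr 1
    ring
  refine ⟨hτs1, ?_⟩
  intro τ hτ
  have hτ1 : 1 < τ := hτ
  rw [hgh τ (lt_trans one_pos hτ1), hgh τstar hτs0, Real.exp_le_exp]
  rcases le_total τ τstar with hle | hle
  · exact anti ⟨hτ1.le, hle⟩ ⟨hτs1.le, le_refl _⟩ hle
  · exact mono (Set.self_mem_Ici) hle hle
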